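/- Let A be positive semidefinite and X, Y operators admitting A-adjoints X^♯, Y^♯. Then dw_A(X + Y) ≤ dw_A(X) + dw_A(Y) + w_A(X^♯Y + Y^♯X). In particular, if A(X^♯Y + Y^♯X) = 0 then dw_A(X + Y) ≤ dw_A(X) + dw_A(Y). -/

import Mathlib

noncomputable section

namespace DW

variable {H : Type*} [NormedAddCommGroup H] [InnerProductSpace ℂ H]

/-- The semi-inner product induced by `A`: `⟨x,y⟩_A = ⟨Ax, y⟩`. -/
def innA (A : H →L[ℂ] H) (x y : H) : ℂ := inner ℂ (A x) y

/-- The seminorm induced by `A`. -/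
def normA (A : H →L[ℂ] H) (x : H) : ℝ := Real.sqrt (innA A x x).re

/-- `T` is `A`-bounded. -/
def IsABounded (A T : H →L[ℂ] H) : Prop := ∃ c > 0, ∀ x, normA A (T x) ≤ c * normA A x

/-- `S` is an `A`-adjoint of `T`. -/
def IsAAdjointPair (A T S : H →L[ℂ] H) : Prop := ∀ x y, innA A (T x) y = innA A x (S y)

/-- The `A`-operator seminorm. -/
def opNormA (A T : H →L[ℂ] H) : ℝ := sSup {r | ∃ x, normA A x = 1 ∧ r = normA A (T x)}

/-- The `A`-minimum modulus. -/
def mA (A T : H →L[ℂ] H) : ℝ := sInf {r | ∃ x, normA A x = 1 ∧ r = normA A (T x)}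

/-- The `A`-numerical radius. -/
def wA (A T : H →L[ℂ] H) : ℝ :=
  sSup {r | ∃ x, normA A x = 1 ∧ r = ‖innA A (T x) x‖}

/-- The `A`-Crawford number. -/
def cA (A T : H →L[ℂ] H) : ℝ :=
  sInf {r | ∃ x, normA A x = 1 ∧ r = ‖innA A (T x) x‖}

/-- The `A`-Davis-Wielandt radius. -/
def dwA (A T : H →L[ℂ] H) : ℝ :=
  sSup {r | ∃ x, normA A x = 1 ∧
    r = Real.sqrt (‖innA A (T x) x‖ ^ 2 + normA A (T x) ^ 4)}

/-- The semi-inner product on `H ⊕ H` induced by `𝔸 = diag(A,A)`. -/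
def innA2 (A : H →L[ℂ] H) (z w : H × H) : ℂ := innA A z.1 w.1 + innA A z.2 w.2

/-- The seminorm on `H ⊕ H` induced by `𝔸 = diag(A,A)`. -/
def normA2 (A : H →L[ℂ] H) (z : H × H) : ℝ := Real.sqrt (innA2 A z z).re

/-- The `𝔸`-numerical radius on `H ⊕ H`, `𝔸 = diag(A,A)`. -/
def wA2 (A : H →L[ℂ] H) (T : H × H →L[ℂ] H × H) : ℝ :=
  sSup {r | ∃ z, normA2 A z = 1 ∧ r = ‖innA2 A (T z) z‖}

/-- The `𝔸`-Davis-Wielandt radius on `H ⊕ H`, `𝔸 = diag(A,A)`. -/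
def dwA2 (A : H →L[ℂ] H) (T : H × H →L[ℂ] H × H) : ℝ :=
  sSup {r | ∃ z, normA2 A z = 1 ∧
    r = Real.sqrt (‖innA2 A (T z) z‖ ^ 2 + normA2 A (T z) ^ 4)}

/-- The block operator `[[0, X], [Y, 0]]` on `H ⊕ H`. -/
def offDiag (X Y : H →L[ℂ] H) : H × H →L[ℂ] H × H :=
  (X.comp (ContinuousLinearMap.snd ℂ H H)).prod (Y.comp (ContinuousLinearMap.fst ℂ H H))

end DW

open DW

variable {H : Type*} [NormedAddCommGroup H] [InnerProductSpace ℂ H] [CompleteSpace H]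

namespace DWAux

variable {A : H →L[ℂ] H}

lemma innA_conj (hA : A.IsPositive) (x y : H) :
    (starRingEnd ℂ) (innA A y x) = innA A x y := by
  have hsym := hA.isSelfAdjoint.isSymmetric x y
  simp only [ContinuousLinearMap.coe_coe] at hsym
  rw [innA, inner_conj_symm, innA, hsym]

lemma innA_nonneg (hA : A.IsPositive) (x : H) : 0 ≤ (innA A x x).re := hA.2 x

lemma innA_add_left (A : H →L[ℂ] H) (x y z : H) :
    innA A (x + y) z = innA A x z + innA A y z := by
  simp [innA, inner_add_left]

lemma innA_add_right (A : H →L[ℂ] H) (x y z : H) :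
    innA A x (y + z) = innA A x y + innA A x z := by
  simp [innA, inner_add_right]

/-- The pre-inner-product core induced by `A`. -/
def core (hA : A.IsPositive) : PreInnerProductSpace.Core ℂ H where
  inner := innA A
  conj_inner_symm := fun x y => innA_conj hA x y
  re_inner_nonneg := fun x => hA.2 x
  add_left := innA_add_left A
  smul_left := fun x y r => by simp [innA, inner_smul_left, mul_comm]

lemma normA_nonneg (A : H →L[ℂ] H) (x : H) : 0 ≤ normA A x := Real.sqrt_nonneg _

lemma normA_sq (hA : A.IsPositive) (x : H) : normA A x ^ 2 = (innA A x x).re := by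
  rw [normA, Real.sq_sqrt (innA_nonneg hA x)]

/-- Cauchy–Schwarz for the semi-inner product. -/
lemma abs_innA_le (hA : A.IsPositive) (x y : H) :
    ‖innA A x y‖ ≤ normA A x * normA A y := by
  have h := @InnerProductSpace.Core.inner_mul_inner_self_le ℂ H _ _ _ (core hA) x y
  have hxy : ‖(innA A x y : ℂ)‖ = ‖(innA A y x : ℂ)‖ := by
    rw [← innA_conj hA x y]; simp
  have h2 : ‖(innA A x y : ℂ)‖ ^ 2 ≤ (innA A x x).re * (innA A y y).re := by
    have : ‖(innA A x y : ℂ)‖ * ‖(innA A y x : ℂ)‖ ≤ (innA A x x).re * (innA A y y).re := h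
    rw [← hxy] at this; nlinarith [norm_nonneg (innA A x y)]
  nlinarith [normA_nonneg A x, normA_nonneg A y, normA_sq hA x, normA_sq hA y,
    norm_nonneg (innA A x y), mul_nonneg (normA_nonneg A x) (normA_nonneg A y)]

lemma adjoint_symm (hA : A.IsPositive) {T T' : H →L[ℂ] H} (h : IsAAdjointPair A T T') :
    IsAAdjointPair A T' T := by
  intro x y
  rw [← innA_conj hA (T' x) y, ← h y x, innA_conj hA x (T y)]

/-- Powers of an `A`-selfadjoint operator are `A`-selfadjoint. -/
lemma pow_selfadj {R : H →L[ℂ] H} (hR : ∀ u v, innA A (R u) v = innA A u (R v)) :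
    ∀ (m : ℕ) (u v : H), innA A ((R ^ m) u) v = innA A u ((R ^ m) v) := by
  intro m
  induction m with
  | zero => intro u v; simp
  | succ n ih =>
    intro u v
    have h1 : (R ^ (n + 1)) u = (R ^ n) (R u) := by
      rw [pow_succ]; rfl
    have h2 : (R ^ (n + 1)) v = R ((R ^ n) v) := by
      rw [pow_succ']; rfl
    rw [h1, h2, ih (R u) v, ← hR u ((R ^ n) v)]

/-- Key boundedness lemma: if `T` has `A`-adjoint `T'` then `‖Tx‖_A² ≤ ‖T'T‖` on the
`A`-unit sphere. -/
lemma normA_apply_sq_le (hA : A.IsPositive) {T T' : H →L[ℂ] H}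
    (hT : IsAAdjointPair A T T') {x : H} (hx : normA A x = 1) :
    normA A (T x) ^ 2 ≤ ‖T'.comp T‖ := by
  set R := T'.comp T with hRdef
  have hT' := adjoint_symm hA hT
  have hR : ∀ u v, innA A (R u) v = innA A u (R v) := by
    intro u v
    have h1 : innA A (T' (T u)) v = innA A (T u) (T v) := hT' (T u) v
    have h2 : innA A u (T' (T v)) = innA A (T u) (T v) := (hT u (T v)).symm ▸ rfl
    simpa [hRdef, ContinuousLinearMap.comp_apply] using h1.trans (hT u (T v))
  set g : ℕ → ℝ := fun n => (innA A ((R ^ (2 ^ n)) x) x).re with hg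
  have hg0 : g 0 = normA A (T x) ^ 2 := by
    have : innA A (R x) x = innA A (T x) (T x) := by
      simpa [hRdef, ContinuousLinearMap.comp_apply] using hT' (T x) x
    simp [hg, pow_one, this, normA_sq hA]
  have hg0nn : 0 ≤ g 0 := by rw [hg0]; positivity
  have hstep : ∀ n, g n ^ 2 ≤ g (n + 1) := by
    intro n
    set S := R ^ (2 ^ n) with hSdef
    have hS : ∀ u v, innA A (S u) v = innA A u (S v) := fun u v => pow_selfadj hR _ u v
    have h1 : |g n| ≤ ‖innA A (S x) x‖ := by
      exact Complex.abs_re_le_norm (innA A (S x) x)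
    have h2 : ‖innA A (S x) x‖ ≤ normA A (S x) := by
      have := abs_innA_le hA (S x) x
      rwa [hx, mul_one] at this
    have h3 : normA A (S x) ^ 2 = g (n + 1) := by
      have hSS : innA A (S x) (S x) = innA A ((S * S) x) x := by
        rw [← hS (S x) x]; rfl
      have hpow : S * S = R ^ (2 ^ (n + 1)) := by
        rw [hSdef, ← pow_add]
        congr 1
        ring
      rw [normA_sq hA, hSS, hpow]
    have : g n ^ 2 ≤ normA A (S x) ^ 2 := by
      have habs : |g n| ≤ normA A (S x) := le_trans h1 h2
      calc g n ^ 2 = |g n| ^ 2 := (sq_abs _).symm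
        _ ≤ normA A (S x) ^ 2 := by
            have := normA_nonneg A (S x)
            nlinarith [abs_nonneg (g n)]
    linarith [h3 ▸ this]
  have hiter : ∀ n, g 0 ^ (2 ^ n) ≤ g n := by
    intro n
    induction n with
    | zero => simp
    | succ n ih =>
      calc g 0 ^ 2 ^ (n + 1) = (g 0 ^ 2 ^ n) ^ 2 := by rw [← pow_mul]; ring_nf
        _ ≤ g n ^ 2 := by
            apply pow_le_pow_left₀ (by positivity) ih
        _ ≤ g (n + 1) := hstep n
  have hub : ∀ n, g n ≤ (‖A‖ * ‖x‖ ^ 2) * ‖R‖ ^ (2 ^ n) := by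
    intro n
    have h1 : g n ≤ ‖innA A ((R ^ (2 ^ n)) x) x‖ :=
      le_trans (le_abs_self _) (Complex.abs_re_le_norm _)
    have h2 : ‖innA A ((R ^ (2 ^ n)) x) x‖ ≤ ‖A ((R ^ (2 ^ n)) x)‖ * ‖x‖ := by
      exact norm_inner_le_norm _ _
    have h3 : ‖A ((R ^ (2 ^ n)) x)‖ ≤ ‖A‖ * (‖R‖ ^ (2 ^ n) * ‖x‖) := by
      calc ‖A ((R ^ (2 ^ n)) x)‖ ≤ ‖A‖ * ‖(R ^ (2 ^ n)) x‖ := A.le_opNorm _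
        _ ≤ ‖A‖ * (‖R ^ (2 ^ n)‖ * ‖x‖) := by
            exact mul_le_mul_of_nonneg_left ((R ^ (2 ^ n)).le_opNorm x) (norm_nonneg A)
        _ ≤ ‖A‖ * (‖R‖ ^ (2 ^ n) * ‖x‖) := by
            have hpw : ‖R ^ (2 ^ n)‖ ≤ ‖R‖ ^ (2 ^ n) := norm_pow_le' R (pow_pos (by norm_num) n)
            gcongr
    calc g n ≤ ‖A ((R ^ (2 ^ n)) x)‖ * ‖x‖ := le_trans h1 h2
      _ ≤ (‖A‖ * (‖R‖ ^ (2 ^ n) * ‖x‖)) * ‖x‖ := by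
          exact mul_le_mul_of_nonneg_right h3 (norm_nonneg x)
      _ = (‖A‖ * ‖x‖ ^ 2) * ‖R‖ ^ (2 ^ n) := by ring
  -- conclude g 0 ≤ ‖R‖
  rw [← hg0]
  by_contra hlt
  push_neg at hlt
  set C := ‖A‖ * ‖x‖ ^ 2 with hC
  have hCnn : 0 ≤ C := by positivity
  have key : ∀ n, g 0 ^ (2 ^ n) ≤ C * ‖R‖ ^ (2 ^ n) := fun n =>
    le_trans (hiter n) (hub n)
  rcases eq_or_lt_of_le (norm_nonneg R) with hR0 | hR0
  · have := key 0
    simp [← hR0] at this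
    linarith [hlt, this]
  · have hrat : ∀ n, (g 0 / ‖R‖) ^ (2 ^ n) ≤ C := by
      intro n
      rw [div_pow, div_le_iff₀ (by positivity)]
      exact key n
    have hone : 1 < g 0 / ‖R‖ := (one_lt_div hR0).mpr hlt
    obtain ⟨n, hn⟩ := pow_unbounded_of_one_lt C hone
    have h2n : (g 0 / ‖R‖) ^ n ≤ (g 0 / ‖R‖) ^ (2 ^ n) :=
      pow_le_pow_right₀ (le_of_lt hone) (Nat.le_of_lt (Nat.lt_two_pow_self))
    linarith [hrat n]

lemma normA_apply_le (hA : A.IsPositive) {T T' : H →L[ℂ] H}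
    (hT : IsAAdjointPair A T T') {x : H} (hx : normA A x = 1) :
    normA A (T x) ≤ Real.sqrt ‖T'.comp T‖ := by
  have h := normA_apply_sq_le hA hT hx
  have := normA_nonneg A (T x)
  rw [show ‖T'.comp T‖ = Real.sqrt ‖T'.comp T‖ ^ 2 by
    rw [Real.sq_sqrt (norm_nonneg _)]] at h
  nlinarith [Real.sqrt_nonneg ‖T'.comp T‖]

lemma bddAbove_dw (hA : A.IsPositive) {T T' : H →L[ℂ] H} (hT : IsAAdjointPair A T T') :
    BddAbove {r | ∃ x, normA A x = 1 ∧
      r = Real.sqrt (‖innA A (T x) x‖ ^ 2 + normA A (T x) ^ 4)} := by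
  use Real.sqrt ‖T'.comp T‖ + ‖T'.comp T‖
  rintro r ⟨x, hx, rfl⟩
  have hp : normA A (T x) ≤ Real.sqrt ‖T'.comp T‖ := normA_apply_le hA hT hx
  have hp2 : normA A (T x) ^ 2 ≤ ‖T'.comp T‖ := normA_apply_sq_le hA hT hx
  have ha : ‖innA A (T x) x‖ ≤ normA A (T x) := by
    have := abs_innA_le hA (T x) x
    rwa [hx, mul_one] at this
  have h1 : Real.sqrt (‖innA A (T x) x‖ ^ 2 + normA A (T x) ^ 4)
      ≤ ‖innA A (T x) x‖ + normA A (T x) ^ 2 := by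
    have hnn : 0 ≤ ‖innA A (T x) x‖ := norm_nonneg _
    have hnn2 : 0 ≤ normA A (T x) ^ 2 := sq_nonneg _
    rw [show normA A (T x) ^ 4 = (normA A (T x) ^ 2) ^ 2 by ring]
    rw [show ‖innA A (T x) x‖ + normA A (T x) ^ 2 =
      Real.sqrt ((‖innA A (T x) x‖ + normA A (T x) ^ 2) ^ 2) by
        rw [Real.sqrt_sq (by positivity)]]
    apply Real.sqrt_le_sqrt
    nlinarith
  calc Real.sqrt (‖innA A (T x) x‖ ^ 2 + normA A (T x) ^ 4)
      ≤ ‖innA A (T x) x‖ + normA A (T x) ^ 2 := h1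
    _ ≤ Real.sqrt ‖T'.comp T‖ + ‖T'.comp T‖ := by
        have := le_trans ha hp
        linarith

lemma bddAbove_w (hA : A.IsPositive) {T T' : H →L[ℂ] H} (hT : IsAAdjointPair A T T') :
    BddAbove {r | ∃ x, normA A x = 1 ∧ r = ‖innA A (T x) x‖} := by
  use Real.sqrt ‖T'.comp T‖
  rintro r ⟨x, hx, rfl⟩
  have hp : normA A (T x) ≤ Real.sqrt ‖T'.comp T‖ := normA_apply_le hA hT hx
  have ha : ‖innA A (T x) x‖ ≤ normA A (T x) := by
    have := abs_innA_le hA (T x) x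
    rwa [hx, mul_one] at this
  linarith

lemma sqrt_sq_add_sq (a b : ℝ) : Real.sqrt (a ^ 2 + b ^ 2) = ‖(⟨a, b⟩ : ℂ)‖ := by
  rw [Complex.norm_def, Complex.normSq_mk]
  congr 1
  ring

end DWAux

open DWAux

theorem stmt13 (A X Y X' Y' : H →L[ℂ] H) (hA : A.IsPositive)
    (hX' : IsAAdjointPair A X X') (hY' : IsAAdjointPair A Y Y') :
    dwA A (X + Y) ≤ dwA A X + dwA A Y + wA A (X'.comp Y + Y'.comp X) ∧
      (A.comp (X'.comp Y + Y'.comp X) = 0 → dwA A (X + Y) ≤ dwA A X + dwA A Y) := by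
  set Z := X'.comp Y + Y'.comp X with hZdef
  have hZadj : IsAAdjointPair A Z Z := by
    intro u v
    have h1 : innA A (X' (Y u)) v = innA A (Y u) (X v) := adjoint_symm hA hX' (Y u) v
    have h2 : innA A (Y' (X u)) v = innA A (X u) (Y v) := adjoint_symm hA hY' (X u) v
    have h3 : innA A (Y u) (X v) = innA A u (Y' (X v)) := hY' u (X v)
    have h4 : innA A (X u) (Y v) = innA A u (X' (Y v)) := hX' u (Y v)
    simp only [hZdef, ContinuousLinearMap.add_apply, ContinuousLinearMap.comp_apply,
      innA_add_left, innA_add_right]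
    rw [h1, h2, h3, h4]
    ring
  have hXYadj : IsAAdjointPair A (X + Y) (X' + Y') := by
    intro u v
    simp only [ContinuousLinearMap.add_apply, innA_add_left, innA_add_right,
      hX' u v, hY' u v, hX' u , hY' u]
  have bX := bddAbove_dw hA hX'
  have bY := bddAbove_dw hA hY'
  have bZ := bddAbove_w hA hZadj
  have hdwXnn : 0 ≤ dwA A X := Real.sSup_nonneg (by rintro r ⟨x, hx, rfl⟩; positivity)
  have hdwYnn : 0 ≤ dwA A Y := Real.sSup_nonneg (by rintro r ⟨x, hx, rfl⟩; positivity)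
  have hwZnn : 0 ≤ wA A Z := Real.sSup_nonneg (by rintro r ⟨x, hx, rfl⟩; positivity)
  have main : dwA A (X + Y) ≤ dwA A X + dwA A Y + wA A Z := by
    apply Real.sSup_le
    · rintro r ⟨x, hx, rfl⟩
      -- abbreviations
      set a := innA A (X x) x with hadef
      set b := innA A (Y x) x with hbdef
      set p := normA A (X x) with hpdef
      set q := normA A (Y x) with hqdef
      set w := innA A (X x) (Y x) with hwdef
      -- the value at x of the sum operator
      have happ : (X + Y) x = X x + Y x := rfl
      have hab : innA A ((X + Y) x) x = a + b := by
        rw [happ, innA_add_left]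
      -- squared seminorm of the sum
      have hnormsq : normA A ((X + Y) x) ^ 2 = p ^ 2 + q ^ 2 + 2 * w.re := by
        rw [normA_sq hA, happ, innA_add_left, innA_add_right, innA_add_right]
        rw [normA_sq hA, normA_sq hA]
        have hconj : innA A (Y x) (X x) = (starRingEnd ℂ) w := (innA_conj hA _ _).symm
        simp [hconj, Complex.add_re, Complex.conj_re]
        ring
      -- relation with Z
      have hZx : innA A (Z x) x = w + (starRingEnd ℂ) w := by
        have h1 : innA A (X' (Y x)) x = innA A (Y x) (X x) := adjoint_symm hA hX' (Y x) x
        have h2 : innA A (Y' (X x)) x = innA A (X x) (Y x) := adjoint_symm hA hY' (X x) x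
        have hconj : innA A (Y x) (X x) = (starRingEnd ℂ) w := (innA_conj hA _ _).symm
        simp only [hZdef, ContinuousLinearMap.add_apply, ContinuousLinearMap.comp_apply,
          innA_add_left, h1, h2, hconj]
        ring
      have hZre : (innA A (Z x) x).re = 2 * w.re := by
        rw [hZx]; simp [Complex.add_re, Complex.conj_re]; ring
      have hwmem : ‖innA A (Z x) x‖ ≤ wA A Z :=
        le_csSup bZ ⟨x, hx, rfl⟩
      set cw := ‖innA A (Z x) x‖ with hcwdef
      have hcw : |2 * w.re| ≤ cw := by
        rw [← hZre]; exact Complex.abs_re_le_norm _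
      -- bound the element
      have hXel : Real.sqrt (‖a‖ ^ 2 + p ^ 4) ≤ dwA A X :=
        le_csSup bX ⟨x, hx, rfl⟩
      have hYel : Real.sqrt (‖b‖ ^ 2 + q ^ 4) ≤ dwA A Y :=
        le_csSup bY ⟨x, hx, rfl⟩
      have hpnn : 0 ≤ p := normA_nonneg A (X x)
      have hqnn : 0 ≤ q := normA_nonneg A (Y x)
      have hcwnn : 0 ≤ cw := norm_nonneg _
      -- rewrite the element
      have helt : Real.sqrt (‖innA A ((X + Y) x) x‖ ^ 2 + normA A ((X + Y) x) ^ 4)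
          = Real.sqrt (‖a + b‖ ^ 2 + (p ^ 2 + q ^ 2 + 2 * w.re) ^ 2) := by
        rw [hab, show normA A ((X + Y) x) ^ 4 = (normA A ((X + Y) x) ^ 2) ^ 2 by ring,
          hnormsq]
      rw [helt]
      -- monotone bound
      have step1 : Real.sqrt (‖a + b‖ ^ 2 + (p ^ 2 + q ^ 2 + 2 * w.re) ^ 2)
          ≤ Real.sqrt ((‖a‖ + ‖b‖) ^ 2 + (p ^ 2 + q ^ 2 + cw) ^ 2) := by
        apply Real.sqrt_le_sqrt
        have t1 : ‖a + b‖ ≤ ‖a‖ + ‖b‖ :=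
          norm_add_le a b
        have t2 : |p ^ 2 + q ^ 2 + 2 * w.re| ≤ p ^ 2 + q ^ 2 + cw := by
          have := abs_add_le (p ^ 2 + q ^ 2) (2 * w.re)
          have h0 : |p ^ 2 + q ^ 2| = p ^ 2 + q ^ 2 := abs_of_nonneg (by positivity)
          calc |p ^ 2 + q ^ 2 + 2 * w.re| ≤ |p ^ 2 + q ^ 2| + |2 * w.re| := abs_add_le _ _
            _ ≤ p ^ 2 + q ^ 2 + cw := by rw [h0]; linarith
        have hn1 : 0 ≤ ‖a + b‖ := norm_nonneg _
        nlinarith [abs_nonneg (p ^ 2 + q ^ 2 + 2 * w.re), sq_abs (p ^ 2 + q ^ 2 + 2 * w.re)]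
      have step2 : Real.sqrt ((‖a‖ + ‖b‖) ^ 2 + (p ^ 2 + q ^ 2 + cw) ^ 2)
          ≤ Real.sqrt (‖a‖ ^ 2 + p ^ 4)
            + Real.sqrt (‖b‖ ^ 2 + q ^ 4) + cw := by
        have e1 : Real.sqrt (‖a‖ ^ 2 + p ^ 4)
            = ‖(⟨‖a‖, p ^ 2⟩ : ℂ)‖ := by
          rw [show p ^ 4 = (p ^ 2) ^ 2 from by ring, sqrt_sq_add_sq]
        have e2 : Real.sqrt (‖b‖ ^ 2 + q ^ 4)
            = ‖(⟨‖b‖, q ^ 2⟩ : ℂ)‖ := by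
          rw [show q ^ 4 = (q ^ 2) ^ 2 from by ring, sqrt_sq_add_sq]
        have e3 : Real.sqrt ((‖a‖ + ‖b‖) ^ 2 + (p ^ 2 + q ^ 2 + cw) ^ 2)
            = ‖(⟨‖a‖, p ^ 2⟩ : ℂ) + (⟨‖b‖, q ^ 2⟩ : ℂ)
              + (⟨0, cw⟩ : ℂ)‖ := by
          rw [sqrt_sq_add_sq]
          congr 1
          apply Complex.ext <;> simp [Complex.add_re, Complex.add_im]
        have e4 : ‖(⟨0, cw⟩ : ℂ)‖ = cw := by
          rw [← sqrt_sq_add_sq]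
          simp [Real.sqrt_sq hcwnn]
        rw [e1, e2, e3]
        calc ‖(⟨‖a‖, p ^ 2⟩ : ℂ) + (⟨‖b‖, q ^ 2⟩ : ℂ)
              + (⟨0, cw⟩ : ℂ)‖
            ≤ ‖(⟨‖a‖, p ^ 2⟩ : ℂ) + (⟨‖b‖, q ^ 2⟩ : ℂ)‖
              + ‖(⟨0, cw⟩ : ℂ)‖ := norm_add_le _ _
          _ ≤ ‖(⟨‖a‖, p ^ 2⟩ : ℂ)‖
              + ‖(⟨‖b‖, q ^ 2⟩ : ℂ)‖ + ‖(⟨0, cw⟩ : ℂ)‖ := by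
              linarith [norm_add_le (⟨‖a‖, p ^ 2⟩ : ℂ)
                (⟨‖b‖, q ^ 2⟩ : ℂ)]
          _ = ‖(⟨‖a‖, p ^ 2⟩ : ℂ)‖
              + ‖(⟨‖b‖, q ^ 2⟩ : ℂ)‖ + cw := by rw [e4]
      calc Real.sqrt (‖a + b‖ ^ 2 + (p ^ 2 + q ^ 2 + 2 * w.re) ^ 2)
          ≤ Real.sqrt ((‖a‖ + ‖b‖) ^ 2 + (p ^ 2 + q ^ 2 + cw) ^ 2) := step1
        _ ≤ Real.sqrt (‖a‖ ^ 2 + p ^ 4)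
            + Real.sqrt (‖b‖ ^ 2 + q ^ 4) + cw := step2
        _ ≤ dwA A X + dwA A Y + cw := by linarith
        _ ≤ dwA A X + dwA A Y + wA A Z := by linarith
    · linarith
  refine ⟨main, fun hZ0 => ?_⟩
  have hwZ0 : wA A Z ≤ 0 := by
    apply Real.sSup_le
    · rintro r ⟨x, hx, rfl⟩
      have : innA A (Z x) x = 0 := by
        have : A (Z x) = 0 := by
          have := congrArg (fun (f : H →L[ℂ] H) => f x) hZ0
          simpa [ContinuousLinearMap.comp_apply] using this
        simp [innA, this]
      simp [this]
    · exact le_refl 0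
  linarith
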